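/- For every pattern η ∈ S₃, the number of permutations in Sₙ avoiding η equals the n-th Catalan number Cₙ = (1/(n+1))·C(2n,n). -/

import Mathlib

open Equiv Filter Real Set

def Contains {n m : ℕ} (σ : Equiv.Perm (Fin n)) (η : Equiv.Perm (Fin m)) : Prop :=
  ∃ f : Fin m → Fin n, StrictMono f ∧ ∀ j k, σ (f j) < σ (f k) ↔ η j < η k

def Avoids {n m : ℕ} (σ : Equiv.Perm (Fin n)) (η : Equiv.Perm (Fin m)) : Prop := ¬ Contains σ η

def Avoids231 {n : ℕ} (σ : Equiv.Perm (Fin n)) : Prop :=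
  ¬ ∃ i₁ i₂ i₃ : Fin n, i₁ < i₂ ∧ i₂ < i₃ ∧ σ i₃ < σ i₁ ∧ σ i₁ < σ i₂

def Avoids132 {n : ℕ} (σ : Equiv.Perm (Fin n)) : Prop :=
  ¬ ∃ i₁ i₂ i₃ : Fin n, i₁ < i₂ ∧ i₂ < i₃ ∧ σ i₁ < σ i₃ ∧ σ i₃ < σ i₂

def Avoids213 {n : ℕ} (σ : Equiv.Perm (Fin n)) : Prop :=
  ¬ ∃ i₁ i₂ i₃ : Fin n, i₁ < i₂ ∧ i₂ < i₃ ∧ σ i₂ < σ i₁ ∧ σ i₁ < σ i₃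

def Avoids312 {n : ℕ} (σ : Equiv.Perm (Fin n)) : Prop :=
  ¬ ∃ i₁ i₂ i₃ : Fin n, i₁ < i₂ ∧ i₂ < i₃ ∧ σ i₂ < σ i₃ ∧ σ i₃ < σ i₁

/-- `f` indexes an alternating subsequence of `σ`. -/
def IsAltSub {n k : ℕ} (σ : Equiv.Perm (Fin n)) (f : Fin k → Fin n) : Prop :=
  StrictMono f ∧ ∀ (j : ℕ) (h : j + 2 < k),
    (σ (f ⟨j, by omega⟩) < σ (f ⟨j + 1, by omega⟩) ↔
      ¬ σ (f ⟨j + 1, by omega⟩) < σ (f ⟨j + 2, by omega⟩))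

/-- The length of the longest alternating subsequence. -/
noncomputable def altLen {n : ℕ} (σ : Equiv.Perm (Fin n)) : ℕ :=
  sSup {k | ∃ f : Fin k → Fin n, IsAltSub σ f}

/-- `f` indexes an alternating subsequence beginning with an ascent and ending with a descent. -/
def IsAltPM {n k : ℕ} (σ : Equiv.Perm (Fin n)) (f : Fin k → Fin n) : Prop :=
  IsAltSub σ f ∧ 3 ≤ k ∧ Odd k ∧
    (∀ (h : 3 ≤ k), σ (f ⟨0, by omega⟩) < σ (f ⟨1, by omega⟩)) ∧
    (∀ (h : 3 ≤ k), σ (f ⟨k - 1, by omega⟩) < σ (f ⟨k - 2, by omega⟩))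

/-- The length `A^{+,-}` of the longest alternating subsequence beginning with an ascent and
ending with a descent; `1` if there is no such subsequence, and `0` when `n = 0`. -/
noncomputable def apm {n : ℕ} (σ : Equiv.Perm (Fin n)) : ℕ :=
  if n = 0 then 0 else max (sSup {k | ∃ f : Fin k → Fin n, IsAltPM σ f}) 1

/-- The length of the longest increasing subsequence. -/
noncomputable def lisLen {n : ℕ} (σ : Equiv.Perm (Fin n)) : ℕ :=
  sSup {k | ∃ f : Fin k → Fin n, StrictMono f ∧ StrictMono (⇑σ ∘ f)}

open scoped Classical in
/-- The moment generating function of `A_n` under the uniform 231-avoiding measure. -/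
noncomputable def Malt (n : ℕ) (lam : ℝ) : ℝ :=
  (∑ σ ∈ Finset.univ.filter (fun σ : Equiv.Perm (Fin n) => Avoids231 σ),
    Real.exp (lam * altLen σ)) / (catalan n)

open scoped Classical in
noncomputable def Mapm (n : ℕ) (lam : ℝ) : ℝ :=
  (∑ σ ∈ Finset.univ.filter (fun σ : Equiv.Perm (Fin n) => Avoids231 σ),
    Real.exp (lam * apm σ)) / (catalan n)

open scoped Classical in
noncomputable def Minc (n : ℕ) (lam : ℝ) : ℝ :=
  (∑ σ ∈ Finset.univ.filter (fun σ : Equiv.Perm (Fin n) => Avoids231 σ),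
    Real.exp (lam * lisLen σ)) / (catalan n)

def P123 {n : ℕ} (σ : Equiv.Perm (Fin n)) : Prop :=
  ¬ ∃ i₁ i₂ i₃ : Fin n, i₁ < i₂ ∧ i₂ < i₃ ∧ σ i₁ < σ i₂ ∧ σ i₂ < σ i₃

section Helpers
variable {n : ℕ}

lemma flip_lt {α β : Type*} [LinearOrder α] [LinearOrder β] {x y : α} {u v : β}
    (hxy : x ≠ y) (huv : u ≠ v) (h : x < y ↔ u < v) : y < x ↔ v < u := by
  constructor
  · intro h2
    exact (not_lt.mp (fun hu => h2.asymm (h.mpr hu))).lt_of_ne huv.symm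
  · intro h2
    exact (not_lt.mp (fun hx => h2.asymm (h.mp hx))).lt_of_ne hxy.symm

lemma not_lt_iff_lt' {x y : Fin n} (h : x ≠ y) : ¬ x < y ↔ y < x :=
  ⟨fun h2 => (not_lt.mp h2).lt_of_ne h.symm, fun h2 => h2.asymm⟩

lemma contains_iff_triple (σ : Perm (Fin n)) (η : Perm (Fin 3)) :
    Contains σ η ↔ ∃ a b c : Fin n, a < b ∧ b < c ∧
      (σ a < σ b ↔ η 0 < η 1) ∧ (σ b < σ c ↔ η 1 < η 2) ∧ (σ a < σ c ↔ η 0 < η 2) := by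
  constructor
  · rintro ⟨f, hf, h⟩
    exact ⟨f 0, f 1, f 2, hf (by decide), hf (by decide), h 0 1, h 1 2, h 0 2⟩
  · rintro ⟨a, b, c, hab, hbc, h01, h12, h02⟩
    refine ⟨![a, b, c], ?_, ?_⟩
    · intro j k hjk
      fin_cases j <;> fin_cases k <;>
        first
          | exact absurd hjk (by decide)
          | simpa using hab
          | simpa using hbc
          | simpa using hab.trans hbc
    · intro j k
      fin_cases j <;> fin_cases k <;>
        simp only [Matrix.cons_val_zero, Matrix.cons_val_one, Matrix.head_cons,
          Matrix.cons_val_two, Matrix.tail_cons, Fin.mk_one, Fin.mk_zero] <;>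
        first
          | exact h01
          | exact h12
          | exact h02
          | exact flip_lt (σ.injective.ne hab.ne) (η.injective.ne (by decide)) h01
          | exact flip_lt (σ.injective.ne hbc.ne) (η.injective.ne (by decide)) h12
          | exact flip_lt (σ.injective.ne (hab.trans hbc).ne) (η.injective.ne (by decide)) h02
          | simp [lt_irrefl]

lemma avoids_eta231 (σ : Perm (Fin n)) : Avoids σ (finRotate 3) ↔ Avoids231 σ := by
  unfold Avoids Avoids231
  rw [contains_iff_triple]
  have e01 : (finRotate 3) 0 < (finRotate 3) 1 := by decide
  have e12 : ¬ (finRotate 3) 1 < (finRotate 3) 2 := by decide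
  have e02 : ¬ (finRotate 3) 0 < (finRotate 3) 2 := by decide
  constructor
  · rintro h ⟨a, b, c, hab, hbc, h1, h2⟩
    exact h ⟨a, b, c, hab, hbc, iff_of_true h2 e01,
      iff_of_false (fun hh => lt_irrefl _ ((h2.trans hh).trans h1)) e12,
      iff_of_false h1.asymm e02⟩
  · rintro h ⟨a, b, c, hab, hbc, h1, h2, h3⟩
    exact h ⟨a, b, c, hab, hbc,
      (not_lt_iff_lt' (σ.injective.ne (hab.trans hbc).ne)).mp (fun x => e02 (h3.mp x)),
      h1.mpr e01⟩

lemma avoids_eta132 (σ : Perm (Fin n)) : Avoids σ (finRotate 3 * Fin.revPerm) ↔ Avoids132 σ := by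
  unfold Avoids Avoids132
  rw [contains_iff_triple]
  have e01 : ((finRotate 3 * Fin.revPerm : Perm (Fin 3))) 0 < ((finRotate 3 * Fin.revPerm : Perm (Fin 3))) 1 := by decide
  have e12 : ¬ ((finRotate 3 * Fin.revPerm : Perm (Fin 3))) 1 < ((finRotate 3 * Fin.revPerm : Perm (Fin 3))) 2 := by decide
  have e02 : ((finRotate 3 * Fin.revPerm : Perm (Fin 3))) 0 < ((finRotate 3 * Fin.revPerm : Perm (Fin 3))) 2 := by decide
  constructor
  · rintro h ⟨a, b, c, hab, hbc, h1, h2⟩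
    exact h ⟨a, b, c, hab, hbc, iff_of_true (h1.trans h2) e01,
      iff_of_false h2.asymm e12, iff_of_true h1 e02⟩
  · rintro h ⟨a, b, c, hab, hbc, h1, h2, h3⟩
    exact h ⟨a, b, c, hab, hbc, h3.mpr e02,
      (not_lt_iff_lt' (σ.injective.ne hbc.ne)).mp (fun x => e12 (h2.mp x))⟩

lemma avoids_eta123 (σ : Perm (Fin n)) : Avoids σ (1 : Perm (Fin 3)) ↔ P123 σ := by
  unfold Avoids P123
  rw [contains_iff_triple]
  have e01 : (1 : Perm (Fin 3)) 0 < (1 : Perm (Fin 3)) 1 := by decide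
  have e12 : (1 : Perm (Fin 3)) 1 < (1 : Perm (Fin 3)) 2 := by decide
  have e02 : (1 : Perm (Fin 3)) 0 < (1 : Perm (Fin 3)) 2 := by decide
  constructor
  · rintro h ⟨a, b, c, hab, hbc, h1, h2⟩
    exact h ⟨a, b, c, hab, hbc, iff_of_true h1 e01, iff_of_true h2 e12,
      iff_of_true (h1.trans h2) e02⟩
  · rintro h ⟨a, b, c, hab, hbc, h1, h2, h3⟩
    exact h ⟨a, b, c, hab, hbc, h1.mpr e01, h2.mpr e12⟩

/-! ### Symmetries -/

lemma revPerm_mul_revPerm : (Fin.revPerm : Perm (Fin n)) * Fin.revPerm = 1 := by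
  ext x
  simp

lemma mul_revPerm_mul_revPerm (σ : Perm (Fin n)) : σ * Fin.revPerm * Fin.revPerm = σ := by
  rw [mul_assoc, revPerm_mul_revPerm, mul_one]

lemma contains_mul_rev_of {m : ℕ} {σ : Perm (Fin n)} {η : Perm (Fin m)}
    (h : Contains σ η) : Contains (σ * Fin.revPerm) (η * Fin.revPerm) := by
  obtain ⟨f, hf, hc⟩ := h
  refine ⟨fun j => (f j.rev).rev, ?_, ?_⟩
  · intro j k hjk
    exact Fin.rev_lt_rev.mpr (hf (Fin.rev_lt_rev.mpr hjk))
  · intro j k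
    simp only [Perm.mul_apply, Fin.revPerm_apply, Fin.rev_rev]
    exact hc j.rev k.rev

lemma contains_mul_rev {m : ℕ} (σ : Perm (Fin n)) (η : Perm (Fin m)) :
    Contains (σ * Fin.revPerm) (η * Fin.revPerm) ↔ Contains σ η := by
  refine ⟨fun h => ?_, contains_mul_rev_of⟩
  have := contains_mul_rev_of h
  rwa [mul_revPerm_mul_revPerm, mul_revPerm_mul_revPerm] at this

lemma contains_rev_mul_of {m : ℕ} {σ : Perm (Fin n)} {η : Perm (Fin m)}
    (h : Contains σ η) : Contains (Fin.revPerm * σ) (Fin.revPerm * η) := by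
  obtain ⟨f, hf, hc⟩ := h
  refine ⟨f, hf, fun j k => ?_⟩
  simp only [Perm.mul_apply, Fin.revPerm_apply]
  rw [Fin.rev_lt_rev, Fin.rev_lt_rev]
  exact hc k j

lemma contains_rev_mul {m : ℕ} (σ : Perm (Fin n)) (η : Perm (Fin m)) :
    Contains (Fin.revPerm * σ) (Fin.revPerm * η) ↔ Contains σ η := by
  refine ⟨fun h => ?_, contains_rev_mul_of⟩
  have := contains_rev_mul_of h
  rwa [← mul_assoc, ← mul_assoc, revPerm_mul_revPerm, revPerm_mul_revPerm, one_mul, one_mul] at this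

lemma contains_inv_of {m : ℕ} {σ : Perm (Fin n)} {η : Perm (Fin m)}
    (h : Contains σ η) : Contains σ⁻¹ η⁻¹ := by
  obtain ⟨f, hf, hc⟩ := h
  refine ⟨fun j => σ (f (η⁻¹ j)), ?_, ?_⟩
  · intro j k hjk
    apply (hc _ _).mpr
    simpa using hjk
  · intro j k
    simp only [Perm.coe_inv, Equiv.symm_apply_apply]
    exact hf.lt_iff_lt

lemma contains_inv {m : ℕ} (σ : Perm (Fin n)) (η : Perm (Fin m)) :
    Contains σ⁻¹ η⁻¹ ↔ Contains σ η := by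
  refine ⟨fun h => ?_, contains_inv_of⟩
  have := contains_inv_of h
  rwa [inv_inv, inv_inv] at this

lemma ncard_avoids_mul_rev {m : ℕ} (η : Perm (Fin m)) :
    {σ : Perm (Fin n) | Avoids σ (η * Fin.revPerm)}.ncard
      = {σ : Perm (Fin n) | Avoids σ η}.ncard := by
  have himg : {σ : Perm (Fin n) | Avoids σ (η * Fin.revPerm)}
      = (fun σ => σ * Fin.revPerm) '' {σ | Avoids σ η} := by
    ext σ'
    simp only [Set.mem_image, Set.mem_setOf_eq]
    constructor
    · intro hσ'
      refine ⟨σ' * Fin.revPerm, fun hc => hσ' ?_, mul_revPerm_mul_revPerm σ'⟩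
      have := contains_mul_rev_of hc
      rwa [mul_revPerm_mul_revPerm] at this
    · rintro ⟨σ, hσ, rfl⟩
      exact fun hc => hσ ((contains_mul_rev σ η).mp hc)
  rw [himg, Set.ncard_image_of_injective _ (mul_left_injective _)]

lemma ncard_avoids_rev_mul {m : ℕ} (η : Perm (Fin m)) :
    {σ : Perm (Fin n) | Avoids σ (Fin.revPerm * η)}.ncard
      = {σ : Perm (Fin n) | Avoids σ η}.ncard := by
  have himg : {σ : Perm (Fin n) | Avoids σ (Fin.revPerm * η)}
      = (fun σ => Fin.revPerm * σ) '' {σ | Avoids σ η} := by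
    ext σ'
    simp only [Set.mem_image, Set.mem_setOf_eq]
    constructor
    · intro hσ'
      refine ⟨Fin.revPerm * σ', fun hc => hσ' ?_, by
        rw [← mul_assoc, revPerm_mul_revPerm, one_mul]⟩
      have := contains_rev_mul_of hc
      rwa [← mul_assoc, revPerm_mul_revPerm, one_mul] at this
    · rintro ⟨σ, hσ, rfl⟩
      exact fun hc => hσ ((contains_rev_mul σ η).mp hc)
  rw [himg, Set.ncard_image_of_injective _ (mul_right_injective _)]

lemma ncard_avoids_inv {m : ℕ} (η : Perm (Fin m)) :
    {σ : Perm (Fin n) | Avoids σ η⁻¹}.ncard = {σ : Perm (Fin n) | Avoids σ η}.ncard := by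
  have himg : {σ : Perm (Fin n) | Avoids σ η⁻¹} = (fun σ => σ⁻¹) '' {σ | Avoids σ η} := by
    ext σ'
    simp only [Set.mem_image, Set.mem_setOf_eq]
    constructor
    · intro hσ'
      refine ⟨σ'⁻¹, fun hc => hσ' ?_, inv_inv σ'⟩
      have := contains_inv_of hc
      rwa [inv_inv] at this
    · rintro ⟨σ, hσ, rfl⟩
      exact fun hc => hσ ((contains_inv σ η).mp hc)
  rw [himg, Set.ncard_image_of_injective _ inv_injective]

end Helpers

/-! ### Counting 231-avoiders -/

section Count231
variable {n : ℕ}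

def joinFun (k : Fin (n+1)) (τ : Perm (Fin k)) (ρ : Perm (Fin (n - k))) (j : Fin (n+1)) :
    Fin (n+1) :=
  if h : (j : ℕ) < k then ⟨τ ⟨j, h⟩, by have := (τ ⟨j, h⟩).isLt; have := k.isLt; omega⟩
  else if h2 : (j : ℕ) = k then ⟨n, by omega⟩
  else ⟨(k : ℕ) + (ρ ⟨(j : ℕ) - ((k : ℕ) + 1), by have := j.isLt; omega⟩ : ℕ),
    by have := (ρ ⟨(j : ℕ) - ((k : ℕ) + 1), by have := j.isLt; omega⟩).isLt; omega⟩

lemma joinFun_lt {k : Fin (n+1)} {τ : Perm (Fin k)} {ρ : Perm (Fin (n - k))}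
    {j : Fin (n+1)} (h : (j : ℕ) < k) :
    (joinFun k τ ρ j : ℕ) = τ ⟨j, h⟩ := by
  simp only [joinFun, dif_pos h]

lemma joinFun_eq {k : Fin (n+1)} {τ : Perm (Fin k)} {ρ : Perm (Fin (n - k))}
    {j : Fin (n+1)} (h : (j : ℕ) = k) :
    (joinFun k τ ρ j : ℕ) = n := by
  simp only [joinFun, dif_neg (by omega : ¬ (j:ℕ) < (k:ℕ)), dif_pos h]

lemma joinFun_gt {k : Fin (n+1)} {τ : Perm (Fin k)} {ρ : Perm (Fin (n - k))}
    {j : Fin (n+1)} (h : (k : ℕ) < j) :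
    (joinFun k τ ρ j : ℕ)
      = (k : ℕ) + (ρ ⟨(j : ℕ) - ((k : ℕ) + 1), by have := j.isLt; omega⟩ : ℕ) := by
  simp only [joinFun, dif_neg (by omega : ¬ (j:ℕ) < (k:ℕ)), dif_neg (by omega : ¬ (j:ℕ) = (k:ℕ))]

lemma joinFun_inj (k : Fin (n+1)) (τ : Perm (Fin k)) (ρ : Perm (Fin (n - k))) :
    Function.Injective (joinFun k τ ρ) := by
  intro a b hab
  have hv := congrArg Fin.val hab
  rcases lt_trichotomy ((a:ℕ)) ((k:ℕ)) with ha | ha | ha <;>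
    rcases lt_trichotomy ((b:ℕ)) ((k:ℕ)) with hb | hb | hb
  · rw [joinFun_lt ha, joinFun_lt hb] at hv
    have h2 := congrArg Fin.val (τ.injective (Fin.ext hv))
    exact Fin.ext h2
  · rw [joinFun_lt ha, joinFun_eq hb] at hv
    have := (τ (⟨(a:ℕ), ha⟩ : Fin k)).isLt
    omega
  · rw [joinFun_lt ha, joinFun_gt hb] at hv
    have := (τ (⟨(a:ℕ), ha⟩ : Fin k)).isLt
    omega
  · rw [joinFun_eq ha, joinFun_lt hb] at hv
    have := (τ (⟨(b:ℕ), hb⟩ : Fin k)).isLt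
    omega
  · exact Fin.ext (ha.trans hb.symm)
  · rw [joinFun_eq ha, joinFun_gt hb] at hv
    have := (ρ (⟨(b:ℕ) - ((k:ℕ)+1), by have := b.isLt; omega⟩ : Fin (n - k))).isLt
    omega
  · rw [joinFun_gt ha, joinFun_lt hb] at hv
    have := (τ (⟨(b:ℕ), hb⟩ : Fin k)).isLt
    omega
  · rw [joinFun_gt ha, joinFun_eq hb] at hv
    have := (ρ (⟨(a:ℕ) - ((k:ℕ)+1), by have := a.isLt; omega⟩ : Fin (n - k))).isLt
    omega
  · rw [joinFun_gt ha, joinFun_gt hb] at hv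
    have h3 := congrArg Fin.val (ρ.injective (Fin.ext (by omega :
      ((ρ (⟨(a:ℕ) - ((k:ℕ)+1), by have := a.isLt; omega⟩ : Fin (n - k))) : ℕ)
        = (ρ (⟨(b:ℕ) - ((k:ℕ)+1), by have := b.isLt; omega⟩ : Fin (n - k))))))
    simp only at h3
    exact Fin.ext (by omega)

noncomputable def joinPerm (k : Fin (n+1)) (τ : Perm (Fin k)) (ρ : Perm (Fin (n - k))) :
    Perm (Fin (n+1)) :=
  Equiv.ofBijective (joinFun k τ ρ) (Finite.injective_iff_bijective.mp (joinFun_inj k τ ρ))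

lemma joinPerm_apply {k : Fin (n+1)} {τ : Perm (Fin k)} {ρ : Perm (Fin (n - k))}
    (j : Fin (n+1)) : (joinPerm k τ ρ) j = joinFun k τ ρ j := rfl

lemma avoids231_joinPerm {k : Fin (n+1)} {τ : Perm (Fin k)} {ρ : Perm (Fin (n - k))}
    (hτ : Avoids231 τ) (hρ : Avoids231 ρ) : Avoids231 (joinPerm k τ ρ) := by
  rintro ⟨a, b, c, hab, hbc, h1, h2⟩
  -- h1 : σ c < σ a, h2 : σ a < σ b
  simp only [joinPerm_apply] at h1 h2
  rw [Fin.lt_def] at hab hbc h1 h2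
  rcases lt_trichotomy ((a:ℕ)) ((k:ℕ)) with ha | ha | ha
  · rcases lt_trichotomy ((c:ℕ)) ((k:ℕ)) with hc | hc | hc
    · -- all three below k
      have hb : (b:ℕ) < k := by omega
      rw [joinFun_lt ha, joinFun_lt hb] at h2
      rw [joinFun_lt hc, joinFun_lt ha] at h1
      exact hτ ⟨⟨a, ha⟩, ⟨b, hb⟩, ⟨c, hc⟩, by rw [Fin.lt_def]; exact hab,
        by rw [Fin.lt_def]; exact hbc, by rw [Fin.lt_def]; exact h1,
        by rw [Fin.lt_def]; exact h2⟩
    · -- c = k : σ c = n is maximal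
      rw [joinFun_eq hc, joinFun_lt ha] at h1
      have := (τ (⟨(a:ℕ), ha⟩ : Fin k)).isLt
      have := k.isLt
      omega
    · -- a < k < c
      rw [joinFun_lt ha, joinFun_gt hc] at h1
      have := (τ (⟨(a:ℕ), ha⟩ : Fin k)).isLt
      omega
  · -- a = k : σ a = n maximal, σ a < σ b impossible
    rw [joinFun_eq ha] at h2
    have hb : (k:ℕ) < b := by omega
    rw [joinFun_gt hb] at h2
    have := (ρ (⟨(b:ℕ) - ((k:ℕ)+1), by have := b.isLt; omega⟩ : Fin (n - k))).isLt
    omega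
  · -- k < a < b < c : all in suffix
    have hb : (k:ℕ) < b := by omega
    have hc : (k:ℕ) < c := by omega
    rw [joinFun_gt ha, joinFun_gt hb] at h2
    rw [joinFun_gt hc, joinFun_gt ha] at h1
    exact hρ ⟨⟨(a:ℕ) - ((k:ℕ)+1), by have := a.isLt; omega⟩,
      ⟨(b:ℕ) - ((k:ℕ)+1), by have := b.isLt; omega⟩,
      ⟨(c:ℕ) - ((k:ℕ)+1), by have := c.isLt; omega⟩,
      by rw [Fin.mk_lt_mk]; omega,
      by rw [Fin.mk_lt_mk]; omega,
      by rw [Fin.lt_def]; exact Nat.lt_of_add_lt_add_left h1,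
      by rw [Fin.lt_def]; exact Nat.lt_of_add_lt_add_left h2⟩

lemma joinPerm_apply_k {k : Fin (n+1)} {τ : Perm (Fin k)} {ρ : Perm (Fin (n - k))} :
    (joinPerm k τ ρ) k = Fin.last n := by
  apply Fin.ext
  rw [joinPerm_apply, joinFun_eq rfl, Fin.val_last]

lemma exists_join (σ : Perm (Fin (n+1))) (hσ : Avoids231 σ) (k : Fin (n+1))
    (hk : σ k = Fin.last n) :
    ∃ (τ : Perm (Fin k)) (ρ : Perm (Fin (n - k))),
      Avoids231 τ ∧ Avoids231 ρ ∧ joinPerm k τ ρ = σ := by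
  have hne : ∀ i : Fin (n+1), i ≠ k → (σ i : ℕ) < n := by
    intro i hi
    have h1 : σ i ≠ Fin.last n := fun h => hi (σ.injective (h.trans hk.symm))
    have h2 : (σ i : ℕ) ≠ n := fun hh => h1 (Fin.ext (by rw [hh, Fin.val_last]))
    have := (σ i).isLt
    omega
  have key1 : ∀ i j : Fin (n+1), (i:ℕ) < k → (k:ℕ) < j → σ i < σ j := by
    intro i j hi hj
    by_contra hcon
    have hij : i ≠ j := fun h => by rw [h] at hi; omega
    have h2 : σ j < σ i :=
      lt_of_le_of_ne (not_lt.mp hcon) (fun h => hij (σ.injective h).symm)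
    have h3 : σ i < σ k := by
      rw [hk, Fin.lt_def, Fin.val_last]
      exact hne i (fun h => by rw [h] at hi; omega)
    exact hσ ⟨i, k, j, by rw [Fin.lt_def]; exact hi, by rw [Fin.lt_def]; exact hj, h2, h3⟩
  have key2 : ∀ i : Fin (n+1), (i:ℕ) < k → (σ i : ℕ) < k := by
    intro i hi
    have hsub : (Finset.Ici k).image σ ⊆ Finset.Ioi (σ i) := by
      intro v hv
      obtain ⟨j, hj, rfl⟩ := Finset.mem_image.mp hv
      rw [Finset.mem_Ici] at hj
      rw [Finset.mem_Ioi]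
      rcases lt_or_eq_of_le hj with h | h
      · exact key1 i j hi (by rw [Fin.lt_def] at h; exact h)
      · rw [← h, hk, Fin.lt_def, Fin.val_last]
        exact hne i (fun hh => by rw [hh] at hi; omega)
    have hcard := Finset.card_le_card hsub
    rw [Finset.card_image_of_injective _ σ.injective, Fin.card_Ici, Fin.card_Ioi] at hcard
    have := (σ i).isLt
    have := k.isLt
    omega
  let τ0 : Fin k → Fin k := fun i => ⟨σ ⟨i, by have := i.isLt; have := k.isLt; omega⟩,
    key2 _ (by exact i.isLt)⟩
  have hτ0inj : Function.Injective τ0 := by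
    intro a b hab
    have hv := congrArg Fin.val hab
    simp only [τ0] at hv
    have h2 := σ.injective (Fin.ext hv)
    have h3 := congrArg Fin.val h2
    exact Fin.ext h3
  have hτ0bij := Finite.injective_iff_bijective.mp hτ0inj
  let τ : Perm (Fin k) := Equiv.ofBijective τ0 hτ0bij
  have key3 : ∀ j : Fin (n+1), (k:ℕ) < j → (k:ℕ) ≤ σ j ∧ (σ j : ℕ) < n := by
    intro j hj
    refine ⟨?_, hne j (fun h => by rw [h] at hj; omega)⟩
    by_contra hcon
    push_neg at hcon
    obtain ⟨i, hi⟩ := hτ0bij.surjective ⟨σ j, hcon⟩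
    have hv := congrArg Fin.val hi
    simp only [τ0] at hv
    have h2 := σ.injective (Fin.ext hv)
    have h3 : ((i:ℕ)) = ((j:ℕ)) := congrArg Fin.val h2
    have := i.isLt
    omega
  have hposlt : ∀ i : Fin (n - k), (k:ℕ) + 1 + (i:ℕ) < n + 1 := by
    intro i; have := i.isLt; omega
  let pos : Fin (n - k) → Fin (n+1) := fun i => ⟨(k:ℕ) + 1 + (i:ℕ), hposlt i⟩
  have hposk : ∀ i : Fin (n - k), (k:ℕ) < pos i := fun i => by
    show (k:ℕ) < (k:ℕ) + 1 + (i:ℕ); omega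
  have hbd : ∀ i : Fin (n - k), (k:ℕ) ≤ σ (pos i) ∧ (σ (pos i) : ℕ) < n :=
    fun i => key3 (pos i) (hposk i)
  let ρ0 : Fin (n - k) → Fin (n - k) := fun i =>
    ⟨(σ (pos i) : ℕ) - k, by have := hbd i; omega⟩
  have hρ0inj : Function.Injective ρ0 := by
    intro a b hab
    have hv := congrArg Fin.val hab
    simp only [ρ0] at hv
    have ha := hbd a
    have hb := hbd b
    have h2 := σ.injective (Fin.ext (by omega : ((σ (pos a) : ℕ)) = ((σ (pos b) : ℕ))))
    have h3 : ((pos a : Fin (n+1)) : ℕ) = ((pos b : Fin (n+1)) : ℕ) := congrArg Fin.val h2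
    have h4 : (k:ℕ) + 1 + (a:ℕ) = (k:ℕ) + 1 + (b:ℕ) := h3
    exact Fin.ext (by omega)
  let ρ : Perm (Fin (n - k)) := Equiv.ofBijective ρ0 (Finite.injective_iff_bijective.mp hρ0inj)
  refine ⟨τ, ρ, ?_, ?_, ?_⟩
  · rintro ⟨a, b, c, hab, hbc, h1, h2⟩
    rw [Fin.lt_def] at hab hbc h1 h2
    simp only [τ, Equiv.ofBijective_apply, τ0] at h1 h2
    exact hσ ⟨⟨a, by have := a.isLt; have := k.isLt; omega⟩,
      ⟨b, by have := b.isLt; have := k.isLt; omega⟩,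
      ⟨c, by have := c.isLt; have := k.isLt; omega⟩,
      by rw [Fin.lt_def]; exact hab, by rw [Fin.lt_def]; exact hbc,
      by rw [Fin.lt_def]; exact h1, by rw [Fin.lt_def]; exact h2⟩
  · rintro ⟨a, b, c, hab, hbc, h1, h2⟩
    rw [Fin.lt_def] at hab hbc h1 h2
    simp only [ρ, Equiv.ofBijective_apply, ρ0] at h1 h2
    have hka := hbd a
    have hkb := hbd b
    have hkc := hbd c
    refine hσ ⟨pos a, pos b, pos c, ?_, ?_, ?_, ?_⟩
    · rw [Fin.lt_def]; show (k:ℕ) + 1 + (a:ℕ) < (k:ℕ) + 1 + (b:ℕ); omega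
    · rw [Fin.lt_def]; show (k:ℕ) + 1 + (b:ℕ) < (k:ℕ) + 1 + (c:ℕ); omega
    · rw [Fin.lt_def]; omega
    · rw [Fin.lt_def]; omega
  · apply Equiv.ext
    intro j
    apply Fin.ext
    rw [joinPerm_apply]
    rcases lt_trichotomy ((j:ℕ)) ((k:ℕ)) with hj | hj | hj
    · rw [joinFun_lt hj]
      show ((τ0 ⟨j, hj⟩ : Fin k) : ℕ) = _
      simp only [τ0]
    · rw [joinFun_eq hj]
      have h : j = k := Fin.ext hj
      rw [h, hk, Fin.val_last]
    · rw [joinFun_gt hj]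
      show (k:ℕ) + ((ρ0 ⟨(j:ℕ) - ((k:ℕ)+1), by have := j.isLt; omega⟩ : Fin (n - k)) : ℕ) = _
      simp only [ρ0]
      have hpj : pos ⟨(j:ℕ) - ((k:ℕ)+1), by have := j.isLt; omega⟩ = j :=
        Fin.ext (show (k:ℕ) + 1 + ((j:ℕ) - ((k:ℕ)+1)) = (j:ℕ) by omega)
      rw [hpj]
      have := key3 j hj
      omega

lemma joinPerm_lt' {k : Fin (n+1)} {τ : Perm (Fin k)} {ρ : Perm (Fin (n - k))} (x : Fin k) :
    ((joinPerm k τ ρ) ⟨(x:ℕ), by have := x.isLt; have := k.isLt; omega⟩ : ℕ) = τ x :=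
  joinFun_lt (by exact x.isLt)

lemma joinPerm_gt' {k : Fin (n+1)} {τ : Perm (Fin k)} {ρ : Perm (Fin (n - k))} (x : Fin (n - k)) :
    ((joinPerm k τ ρ) ⟨(k:ℕ)+1+(x:ℕ), by have := x.isLt; omega⟩ : ℕ) = (k:ℕ) + (ρ x : ℕ) := by
  rw [joinPerm_apply, joinFun_gt (by show (k:ℕ) < (k:ℕ)+1+(x:ℕ); omega)]
  congr 1
  exact congrArg (fun y => ((ρ y : Fin (n - k)) : ℕ))
    (Fin.ext (show ((k:ℕ)+1+(x:ℕ)) - ((k:ℕ)+1) = (x:ℕ) by omega))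

open scoped Classical in
noncomputable def ASet (n : ℕ) : Finset (Perm (Fin n)) :=
  Finset.univ.filter (fun σ => Avoids231 σ)

open scoped Classical in
lemma mem_ASet {n : ℕ} {σ : Perm (Fin n)} : σ ∈ ASet n ↔ Avoids231 σ := by
  simp [ASet]

lemma card_ASet : ∀ n : ℕ, (ASet n).card = catalan n := by
  intro n
  induction n using Nat.strong_induction_on with
  | _ n IH =>
    match n with
    | 0 =>
      rw [catalan_zero]
      have : ASet 0 = Finset.univ := by
        ext σ
        simp only [mem_ASet, Finset.mem_univ, iff_true]
        rintro ⟨i, _, _, _⟩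
        exact i.elim0
      rw [this, Finset.card_univ]
      simp [Fintype.card_perm]
    | (m+1) =>
      rw [catalan_succ]
      rw [Finset.card_eq_sum_card_fiberwise
        (f := fun σ : Perm (Fin (m+1)) => σ⁻¹ (Fin.last m)) (t := Finset.univ)
        (fun x _ => Finset.mem_univ _)]
      refine Finset.sum_congr rfl (fun k _ => ?_)
      have hk1 : ((k : ℕ)) < m + 1 := k.isLt
      have IH1 := IH (k : ℕ) hk1
      have IH2 := IH (m - (k : ℕ)) (by omega)
      rw [← IH1, ← IH2, ← Finset.card_product]
      refine (Finset.card_bij (fun p _ => joinPerm k p.1 p.2) ?_ ?_ ?_).symm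
      · rintro ⟨τ, ρ⟩ hp
        rw [Finset.mem_product] at hp
        rw [Finset.mem_filter]
        refine ⟨mem_ASet.mpr (avoids231_joinPerm (mem_ASet.mp hp.1) (mem_ASet.mp hp.2)), ?_⟩
        rw [Equiv.Perm.inv_eq_iff_eq]
        exact joinPerm_apply_k.symm
      · rintro ⟨τ, ρ⟩ hp ⟨τ', ρ'⟩ hq heq
        have heq' : joinPerm k τ ρ = joinPerm k τ' ρ' := heq
        simp only [Prod.mk.injEq]
        constructor
        · apply Equiv.ext; intro x
          apply Fin.ext
          have e1 := joinPerm_lt' (k := k) (τ := τ) (ρ := ρ) x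
          have e2 := joinPerm_lt' (k := k) (τ := τ') (ρ := ρ') x
          rw [heq'] at e1
          omega
        · apply Equiv.ext; intro x
          apply Fin.ext
          have e1 := joinPerm_gt' (k := k) (τ := τ) (ρ := ρ) x
          have e2 := joinPerm_gt' (k := k) (τ := τ') (ρ := ρ') x
          rw [heq'] at e1
          omega
      · intro σ hσ
        rw [Finset.mem_filter] at hσ
        obtain ⟨hAv, hkk⟩ := hσ
        have hk2 : σ k = Fin.last m := (Equiv.Perm.inv_eq_iff_eq.mp hkk).symm
        obtain ⟨τ, ρ, hτ, hρ, hj⟩ := exists_join σ (mem_ASet.mp hAv) k hk2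
        exact ⟨(τ, ρ), Finset.mem_product.mpr ⟨mem_ASet.mpr hτ, mem_ASet.mpr hρ⟩, hj⟩

end Count231

/-! ### Simion–Schmidt -/

section SS
variable {n : ℕ}

open scoped Classical in
noncomputable def mdata (σ : Perm (Fin n)) : Fin n → Option (Fin n) :=
  fun i => if ∀ j, j < i → σ i < σ j then some (σ i) else none

lemma mdata_spec {σ τ : Perm (Fin n)} (h : mdata σ = mdata τ) (i : Fin n)
    (h1 : ∀ j, j < i → σ i < σ j) : (∀ j, j < i → τ i < τ j) ∧ σ i = τ i := by
  classical
  have hi := congrFun h i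
  unfold mdata at hi
  rw [if_pos h1] at hi
  by_cases h2 : ∀ j, j < i → τ i < τ j
  · rw [if_pos h2] at hi
    exact ⟨h2, Option.some.inj hi⟩
  · rw [if_neg h2] at hi
    exact absurd hi (by simp)

lemma exists_lt_of_not_min {σ τ : Perm (Fin n)} (h : mdata σ = mdata τ) {p : Fin n}
    (hlt : σ p ≠ τ p) : ∃ i, i < p ∧ σ i < σ p := by
  by_cases hmin : ∀ j, j < p → σ p < σ j
  · exact absurd (mdata_spec h p hmin).2 hlt
  · push_neg at hmin
    obtain ⟨i, hip, hi⟩ := hmin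
    refine ⟨i, hip, lt_of_le_of_ne hi (fun hh => (hip.ne (σ.injective hh)).elim)⟩

lemma aux132 {σ τ : Perm (Fin n)} (hτ : Avoids132 τ) (h : mdata σ = mdata τ)
    (p : Fin n) (hagree : ∀ j, j < p → σ j = τ j) (hlt : σ p < τ p) : False := by
  obtain ⟨i0, hi0p, hi0⟩ := exists_lt_of_not_min h hlt.ne
  set q := τ⁻¹ (σ p) with hqdef
  have hτq : τ q = σ p := Equiv.apply_symm_apply τ (σ p)
  have hqp : q ≠ p := fun hh => by rw [hh] at hτq; exact hlt.ne' hτq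
  have hpq : p < q := by
    rcases lt_or_gt_of_ne hqp with hcase | hcase
    · exfalso
      have := (hagree q hcase).trans hτq
      exact (hcase.ne (σ.injective this)).elim
    · exact hcase
  exact hτ ⟨i0, p, q, hi0p, hpq,
    by rw [← hagree i0 hi0p] at *; rw [hτq]; exact hi0,
    by rw [hτq]; exact hlt⟩

lemma aux123 {σ τ : Perm (Fin n)} (hσ : P123 σ) (h : mdata σ = mdata τ)
    (p : Fin n) (hagree : ∀ j, j < p → σ j = τ j) (hlt : σ p < τ p) : False := by
  obtain ⟨i0, hi0p, hi0⟩ := exists_lt_of_not_min h hlt.ne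
  set q := σ⁻¹ (τ p) with hqdef
  have hσq : σ q = τ p := Equiv.apply_symm_apply σ (τ p)
  have hqp : q ≠ p := fun hh => by rw [hh] at hσq; exact hlt.ne hσq
  have hpq : p < q := by
    rcases lt_or_gt_of_ne hqp with hcase | hcase
    · exfalso
      have := (hagree q hcase).symm.trans hσq
      exact (hcase.ne (τ.injective this)).elim
    · exact hcase
  exact hσ ⟨i0, p, q, hi0p, hpq, hi0, by rw [hσq]; exact hlt⟩

lemma mdata_inj_aux {σ τ : Perm (Fin n)} (h : mdata σ = mdata τ) (hne : σ ≠ τ) :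
    ∃ p : Fin n, (∀ j, j < p → σ j = τ j) ∧ σ p ≠ τ p := by
  classical
  have hex : ∃ i, σ i ≠ τ i := by
    by_contra hc; push_neg at hc; exact hne (Equiv.ext hc)
  let s := Finset.univ.filter (fun i => σ i ≠ τ i)
  have hs : s.Nonempty := by
    obtain ⟨i, hi⟩ := hex; exact ⟨i, by simp [s, hi]⟩
  refine ⟨s.min' hs, ?_, ?_⟩
  · intro j hj
    by_contra hc
    have h2 : s.min' hs ≤ j := Finset.min'_le s j (by simp [s, hc])
    exact absurd hj (not_lt.mpr h2)
  · have := s.min'_mem hs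
    simpa [s] using this

lemma mdata_inj_132 {σ τ : Perm (Fin n)} (hσ : Avoids132 σ) (hτ : Avoids132 τ)
    (h : mdata σ = mdata τ) : σ = τ := by
  by_contra hne
  obtain ⟨p, hagree, hpd⟩ := mdata_inj_aux h hne
  rcases hpd.lt_or_gt with hcase | hcase
  · exact aux132 hτ h p hagree hcase
  · exact aux132 hσ h.symm p (fun j hj => (hagree j hj).symm) hcase

lemma mdata_inj_123 {σ τ : Perm (Fin n)} (hσ : P123 σ) (hτ : P123 τ)
    (h : mdata σ = mdata τ) : σ = τ := by
  by_contra hne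
  obtain ⟨p, hagree, hpd⟩ := mdata_inj_aux h hne
  rcases hpd.lt_or_gt with hcase | hcase
  · exact aux123 hσ h p hagree hcase
  · exact aux123 hτ h.symm p (fun j hj => (hagree j hj).symm) hcase

open scoped Classical in
lemma mdata_swap {σ : Perm (Fin n)} {a b c : Fin n} (hab : a < b) (hbc : b < c)
    (h1 : σ a < σ b) (h2 : σ a < σ c) :
    mdata (σ * Equiv.swap b c) = mdata σ := by
  have hvb : (σ * Equiv.swap b c) b = σ c := by
    rw [Equiv.Perm.mul_apply, Equiv.swap_apply_left]
  have hvc : (σ * Equiv.swap b c) c = σ b := by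
    rw [Equiv.Perm.mul_apply, Equiv.swap_apply_right]
  have hvo : ∀ x, x ≠ b → x ≠ c → (σ * Equiv.swap b c) x = σ x := by
    intro x hx1 hx2
    rw [Equiv.Perm.mul_apply, Equiv.swap_apply_of_ne_of_ne hx1 hx2]
  funext i
  unfold mdata
  rcases lt_trichotomy i b with hib | hib | hib
  · have hvi : (σ * Equiv.swap b c) i = σ i := hvo i hib.ne (hib.trans hbc).ne
    have hcong : (∀ j, j < i → (σ * Equiv.swap b c) i < (σ * Equiv.swap b c) j)
        ↔ (∀ j, j < i → σ i < σ j) := by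
      constructor
      · intro H j hj
        have h3 := H j hj
        rwa [hvi, hvo j (hj.trans hib).ne ((hj.trans hib).trans hbc).ne] at h3
      · intro H j hj
        rw [hvi, hvo j (hj.trans hib).ne ((hj.trans hib).trans hbc).ne]
        exact H j hj
    rw [if_congr hcong (by rw [hvi]) rfl]
  · rw [hib]
    have hP' : ¬ ∀ j, j < b → (σ * Equiv.swap b c) b < (σ * Equiv.swap b c) j := by
      intro H
      have h3 := H a hab
      rw [hvb, hvo a hab.ne (hab.trans hbc).ne] at h3
      exact h2.asymm h3
    have hP : ¬ ∀ j, j < b → σ b < σ j := by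
      intro H
      exact h1.asymm (H a hab)
    rw [if_neg hP', if_neg hP]
  · rcases lt_trichotomy i c with hic | hic | hic
    · have hvi : (σ * Equiv.swap b c) i = σ i := hvo i (ne_of_gt hib) hic.ne
      have hcong : (∀ j, j < i → (σ * Equiv.swap b c) i < (σ * Equiv.swap b c) j)
          ↔ (∀ j, j < i → σ i < σ j) := by
        constructor
        · intro H j hj
          by_cases hjb : j = b
          · subst hjb
            have h3 := H a (hab.trans hib)
            rw [hvi, hvo a hab.ne (hab.trans hbc).ne] at h3
            exact h3.trans h1
          · have h3 := H j hj
            rwa [hvi, hvo j hjb (hj.trans hic).ne] at h3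
        · intro H j hj
          by_cases hjb : j = b
          · subst hjb
            rw [hvi, hvb]
            exact (H a (hab.trans hib)).trans h2
          · rw [hvi, hvo j hjb (hj.trans hic).ne]
            exact H j hj
      rw [if_congr hcong (by rw [hvi]) rfl]
    · rw [hic]
      have hP' : ¬ ∀ j, j < c → (σ * Equiv.swap b c) c < (σ * Equiv.swap b c) j := by
        intro H
        have h3 := H a (hab.trans hbc)
        rw [hvc, hvo a hab.ne (hab.trans hbc).ne] at h3
        exact h1.asymm h3
      have hP : ¬ ∀ j, j < c → σ c < σ j := by
        intro H
        exact h2.asymm (H a (hab.trans hbc))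
      rw [if_neg hP', if_neg hP]
    · have hvi : (σ * Equiv.swap b c) i = σ i := hvo i (ne_of_gt (hbc.trans hic)) (ne_of_gt hic)
      have hswlt : ∀ j, j < i → Equiv.swap b c j < i := by
        intro j hj
        by_cases hjb : j = b
        · rw [hjb, Equiv.swap_apply_left]; exact hic
        · by_cases hjc : j = c
          · rw [hjc, Equiv.swap_apply_right]; exact hbc.trans hic
          · rw [Equiv.swap_apply_of_ne_of_ne hjb hjc]; exact hj
      have hcong : (∀ j, j < i → (σ * Equiv.swap b c) i < (σ * Equiv.swap b c) j)
          ↔ (∀ j, j < i → σ i < σ j) := by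
        constructor
        · intro H j hj
          have h3 := H (Equiv.swap b c j) (hswlt j hj)
          have h4 : (σ * Equiv.swap b c) (Equiv.swap b c j) = σ j := by
            rw [Equiv.Perm.mul_apply, Equiv.swap_apply_self]
          rwa [hvi, h4] at h3
        · intro H j hj
          rw [hvi, Equiv.Perm.mul_apply]
          exact H (Equiv.swap b c j) (hswlt j hj)
      rw [if_congr hcong (by rw [hvi]) rfl]

lemma sum_split (w : Perm (Fin n)) {b c : Fin n} (hbc : b ≠ c) :
    ∑ i : Fin n, i.val * (w i).val
      = (b:ℕ) * ((w b : Fin n) : ℕ) + ((c:ℕ) * ((w c : Fin n) : ℕ)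
          + ∑ i ∈ (Finset.univ.erase b).erase c, i.val * (w i).val) := by
  rw [← Finset.add_sum_erase _ _ (Finset.mem_univ b)]
  congr 1
  rw [← Finset.add_sum_erase _ _ (Finset.mem_erase.mpr ⟨hbc.symm, Finset.mem_univ c⟩)]

open scoped Classical in
lemma exists_avoids132_mdata (τ0 : Perm (Fin n)) :
    ∃ σ, mdata σ = mdata τ0 ∧ Avoids132 σ := by
  classical
  obtain ⟨σ, hσs, hmax⟩ := Finset.exists_max_image
    (Finset.univ.filter (fun σ : Perm (Fin n) => mdata σ = mdata τ0))
    (fun σ => ∑ i : Fin n, i.val * (σ i).val) ⟨τ0, by simp⟩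
  rw [Finset.mem_filter] at hσs
  refine ⟨σ, hσs.2, ?_⟩
  rintro ⟨a, b, c, hab, hbc, h1, h2⟩
  have hdata := mdata_swap hab hbc (h1.trans h2) h1
  have hle := hmax (σ * Equiv.swap b c)
    (Finset.mem_filter.mpr ⟨Finset.mem_univ _, hdata.trans hσs.2⟩)
  have hsum1 := sum_split σ hbc.ne
  have hsum2 := sum_split (σ * Equiv.swap b c) hbc.ne
  have hb : (σ * Equiv.swap b c) b = σ c := by
    rw [Equiv.Perm.mul_apply, Equiv.swap_apply_left]
  have hc : (σ * Equiv.swap b c) c = σ b := by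
    rw [Equiv.Perm.mul_apply, Equiv.swap_apply_right]
  have hrest : ∑ i ∈ (Finset.univ.erase b).erase c, i.val * (((σ * Equiv.swap b c)) i).val
      = ∑ i ∈ (Finset.univ.erase b).erase c, i.val * (σ i).val := by
    apply Finset.sum_congr rfl
    intro x hx
    rw [Finset.mem_erase, Finset.mem_erase] at hx
    rw [Equiv.Perm.mul_apply, Equiv.swap_apply_of_ne_of_ne hx.2.1 hx.1]
  simp only [hsum1, hsum2, hb, hc, hrest] at hle
  have hineq : (b:ℕ) * (σ b : ℕ) + (c:ℕ) * (σ c : ℕ)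
      < (b:ℕ) * (σ c : ℕ) + (c:ℕ) * (σ b : ℕ) :=
    mul_add_mul_lt_mul_add_mul (show (b:ℕ) < (c:ℕ) from hbc) (show (σ c:ℕ) < (σ b:ℕ) from h2)
  omega

open scoped Classical in
lemma exists_P123_mdata (τ0 : Perm (Fin n)) :
    ∃ σ, mdata σ = mdata τ0 ∧ P123 σ := by
  classical
  obtain ⟨σ, hσs, hmin⟩ := Finset.exists_min_image
    (Finset.univ.filter (fun σ : Perm (Fin n) => mdata σ = mdata τ0))
    (fun σ => ∑ i : Fin n, i.val * (σ i).val) ⟨τ0, by simp⟩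
  rw [Finset.mem_filter] at hσs
  refine ⟨σ, hσs.2, ?_⟩
  rintro ⟨a, b, c, hab, hbc, h1, h2⟩
  have hdata := mdata_swap hab hbc h1 (h1.trans h2)
  have hle := hmin (σ * Equiv.swap b c)
    (Finset.mem_filter.mpr ⟨Finset.mem_univ _, hdata.trans hσs.2⟩)
  have hsum1 := sum_split σ hbc.ne
  have hsum2 := sum_split (σ * Equiv.swap b c) hbc.ne
  have hb : (σ * Equiv.swap b c) b = σ c := by
    rw [Equiv.Perm.mul_apply, Equiv.swap_apply_left]
  have hc : (σ * Equiv.swap b c) c = σ b := by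
    rw [Equiv.Perm.mul_apply, Equiv.swap_apply_right]
  have hrest : ∑ i ∈ (Finset.univ.erase b).erase c, i.val * (((σ * Equiv.swap b c)) i).val
      = ∑ i ∈ (Finset.univ.erase b).erase c, i.val * (σ i).val := by
    apply Finset.sum_congr rfl
    intro x hx
    rw [Finset.mem_erase, Finset.mem_erase] at hx
    rw [Equiv.Perm.mul_apply, Equiv.swap_apply_of_ne_of_ne hx.2.1 hx.1]
  simp only [hsum1, hsum2, hb, hc, hrest] at hle
  have hineq : (b:ℕ) * (σ c : ℕ) + (c:ℕ) * (σ b : ℕ)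
      < (b:ℕ) * (σ b : ℕ) + (c:ℕ) * (σ c : ℕ) :=
    mul_add_mul_lt_mul_add_mul (show (b:ℕ) < (c:ℕ) from hbc) (show (σ b:ℕ) < (σ c:ℕ) from h2)
  omega

lemma ncard_132_eq_123 :
    {σ : Perm (Fin n) | Avoids132 σ}.ncard = {σ : Perm (Fin n) | P123 σ}.ncard := by
  have himg : mdata '' {σ : Perm (Fin n) | Avoids132 σ} = mdata '' {σ | P123 σ} := by
    apply Set.eq_of_subset_of_subset
    · rintro x ⟨σ, hσ, rfl⟩
      obtain ⟨σ', hd, h123⟩ := exists_P123_mdata σ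
      exact ⟨σ', h123, hd⟩
    · rintro x ⟨σ, hσ, rfl⟩
      obtain ⟨σ', hd, h132⟩ := exists_avoids132_mdata σ
      exact ⟨σ', h132, hd⟩
  have e1 : (mdata '' {σ : Perm (Fin n) | Avoids132 σ}).ncard
      = {σ : Perm (Fin n) | Avoids132 σ}.ncard :=
    Set.ncard_image_of_injOn (fun x hx y hy hxy => mdata_inj_132 hx hy hxy)
  have e2 : (mdata '' {σ : Perm (Fin n) | P123 σ}).ncard
      = {σ : Perm (Fin n) | P123 σ}.ncard :=
    Set.ncard_image_of_injOn (fun x hx y hy hxy => mdata_inj_123 hx hy hxy)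
  rw [← e1, himg, e2]

end SS

open scoped Classical in
lemma ncard_avoids231 (n : ℕ) : {σ : Perm (Fin n) | Avoids231 σ}.ncard = catalan n := by
  classical
  have h : {σ : Perm (Fin n) | Avoids231 σ} = ↑(ASet n) := by
    ext σ
    simp [mem_ASet]
  rw [h, Set.ncard_coe_finset]
  exact card_ASet n

/-- For every pattern `η ∈ S₃`, the number of `η`-avoiding permutations of `[n]` is the
`n`-th Catalan number. -/
theorem avoiding_card_eq_catalan (n : ℕ) (η : Equiv.Perm (Fin 3)) :
    {σ : Equiv.Perm (Fin n) | Avoids σ η}.ncard = catalan n := by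
  have hbase : {σ : Perm (Fin n) | Avoids σ (finRotate 3)}.ncard = catalan n := by
    have hset : {σ : Perm (Fin n) | Avoids σ (finRotate 3)} = {σ | Avoids231 σ} :=
      Set.ext (fun σ => avoids_eta231 σ)
    rw [hset]
    exact ncard_avoids231 n
  have h132 : {σ : Perm (Fin n) | Avoids σ (finRotate 3 * Fin.revPerm)}.ncard = catalan n := by
    rw [ncard_avoids_mul_rev]
    exact hbase
  have h123 : {σ : Perm (Fin n) | Avoids σ (1 : Perm (Fin 3))}.ncard = catalan n := by
    have hs1 : {σ : Perm (Fin n) | Avoids σ (1 : Perm (Fin 3))} = {σ | P123 σ} :=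
      Set.ext (fun σ => avoids_eta123 σ)
    have hs2 : {σ : Perm (Fin n) | Avoids σ (finRotate 3 * Fin.revPerm)} = {σ | Avoids132 σ} :=
      Set.ext (fun σ => avoids_eta132 σ)
    rw [hs1, ← ncard_132_eq_123, ← hs2]
    exact h132
  have hall : ∀ ξ : Perm (Fin 3), ξ = 1 ∨ ξ = finRotate 3 ∨ ξ = (finRotate 3)⁻¹ ∨
      ξ = Fin.revPerm ∨ ξ = finRotate 3 * Fin.revPerm ∨ ξ = Fin.revPerm * finRotate 3 := by
    decide
  rcases hall η with rfl | rfl | rfl | rfl | rfl | rfl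
  · exact h123
  · exact hbase
  · rw [ncard_avoids_inv]
    exact hbase
  · have h : (Fin.revPerm : Perm (Fin 3)) = 1 * Fin.revPerm := (one_mul _).symm
    rw [h, ncard_avoids_mul_rev]
    exact h123
  · exact h132
  · rw [ncard_avoids_rev_mul]
    exact hbase
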